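/- Let R₁,…,R_ℓ ∈ ℝⁿ with R₁,…,R_{ℓ−1} linearly independent and R_ℓ not in their span, and let p' > ℓ. Then ∫_{ℝ^{ℓ−1}} ‖R_ℓ + ∑_{i=1}^{ℓ−1} tⁱ R_i‖^{−(p'−1)} dt = (G(R₁,…,R_{ℓ−1}))^{(p'−ℓ−1)/2} / (G(R₁,…,R_ℓ))^{(p'−ℓ)/2} · ∫_{ℝ^{ℓ−1}} (1+‖t‖²)^{−(p'−1)/2} dt, and the last integral is finite if and only if p' > ℓ. -/

import Mathlib

open MeasureTheory

/-- The Gram determinant of vectors in a real inner product space. -/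
noncomputable def gram {H : Type*} [NormedAddCommGroup H] [InnerProductSpace ℝ H]
    {k : ℕ} (v : Fin k → H) : ℝ :=
  Matrix.det (Matrix.of fun i j : Fin k => (inner ℝ (v i) (v j) : ℝ))

section Aux

open Metric Set Module Matrix
open scoped ENNReal


theorem integral_comp_linEquiv {E : Type*} [NormedAddCommGroup E] [NormedSpace ℝ E]
    [MeasurableSpace E] [BorelSpace E] [FiniteDimensional ℝ E] (μ : Measure E)
    [μ.IsAddHaarMeasure] (L : E ≃ₗ[ℝ] E) (g : E → ℝ) :
    ∫ x, g (L x) ∂μ = |LinearMap.det (L : E →ₗ[ℝ] E)|⁻¹ * ∫ x, g x ∂μ := by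
  have hdet : LinearMap.det (L : E →ₗ[ℝ] E) ≠ 0 := by simpa using L.isUnit_det'.ne_zero
  have h1 : μ.map (L : E →ₗ[ℝ] E) = ENNReal.ofReal |(LinearMap.det (L : E →ₗ[ℝ] E))⁻¹| • μ :=
    Measure.map_linearMap_addHaar_eq_smul_addHaar _ hdet
  have h2 : ∫ x, g (L x) ∂μ = ∫ y, g y ∂(μ.map (L : E →ₗ[ℝ] E)) := by
    rw [show ⇑(L : E →ₗ[ℝ] E) = ⇑(L.toContinuousLinearEquiv.toHomeomorph.toMeasurableEquiv) from rfl,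
      integral_map_equiv (L.toContinuousLinearEquiv.toHomeomorph.toMeasurableEquiv) g]
    rfl
  rw [h2, h1, integral_smul_measure, ENNReal.toReal_ofReal (abs_nonneg _), abs_inv, smul_eq_mul]


lemma not_integrable_aux {E : Type*} [NormedAddCommGroup E] [NormedSpace ℝ E] [MeasurableSpace E]
    [BorelSpace E] [FiniteDimensional ℝ E] (μ : Measure E) [μ.IsAddHaarMeasure]
    (hd : 0 < finrank ℝ E) :
    ¬ Integrable (fun x : E => (1 + ‖x‖) ^ (-(finrank ℝ E : ℝ))) μ := by
  intro h
  set d := finrank ℝ E with hdef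
  haveI : Nontrivial E := finrank_pos_iff.1 hd
  have hfin : ∫⁻ x, ENNReal.ofReal ((1 + ‖x‖) ^ (-(d : ℝ))) ∂μ < ∞ := h.lintegral_lt_top
  set A : ℕ → Set E := fun k => ball (0 : E) (2 ^ (k + 1)) \ ball (0 : E) (2 ^ k) with hA
  have hmeas : ∀ k, MeasurableSet (A k) := fun k =>
    measurableSet_ball.diff measurableSet_ball
  have hdisj : Pairwise (Function.onFun Disjoint A) := by
    intro k l hkl
    wlog hlt : k < l generalizing k l
    · exact (this hkl.symm (by omega)).symm
    refine Set.disjoint_left.2 fun x hx hx' => ?_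
    have h1 : ‖x‖ < 2 ^ (k + 1) := by simpa using hx.1
    have h2 : ¬ (‖x‖ < 2 ^ l) := by simpa using hx'.2
    exact h2 (h1.trans_le (by exact_mod_cast pow_le_pow_right₀ one_le_two (by omega)))
  -- lower bound for each annulus integral
  set β := μ (ball (0 : E) 1) with hβ
  have hβpos : 0 < β := measure_ball_pos μ 0 one_pos
  have hβfin : β < ∞ := measure_ball_lt_top
  set c : ℝ≥0∞ := ENNReal.ofReal (((4 : ℝ) ^ d)⁻¹) * β with hc
  have hcpos : c ≠ 0 := by
    apply mul_ne_zero _ hβpos.ne'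
    simp only [ne_eq, ENNReal.ofReal_eq_zero, not_le]
    positivity
  have key : ∀ k : ℕ, c ≤ ∫⁻ x in A k, ENNReal.ofReal ((1 + ‖x‖) ^ (-(d : ℝ))) ∂μ := by
    intro k
    have hsub : ball (0 : E) (2 ^ k) ⊆ ball (0 : E) (2 ^ (k + 1)) :=
      ball_subset_ball (by exact pow_le_pow_right₀ one_le_two (by omega))
    have hAk : ENNReal.ofReal ((2 ^ k : ℝ) ^ d) * β ≤ μ (A k) := by
      have h1 : μ (ball (0 : E) (2 ^ (k + 1))) - μ (ball (0 : E) (2 ^ k)) ≤ μ (A k) :=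
        le_measure_diff
      have h2 : μ (ball (0 : E) (2 ^ (k + 1))) = ENNReal.ofReal ((2 ^ (k + 1) : ℝ) ^ d) * β :=
        μ.addHaar_ball 0 (by positivity)
      have h3 : μ (ball (0 : E) (2 ^ k)) = ENNReal.ofReal ((2 ^ k : ℝ) ^ d) * β :=
        μ.addHaar_ball 0 (by positivity)
      refine le_trans ?_ h1
      rw [h2, h3, ← ENNReal.sub_mul (fun _ _ => hβfin.ne)]
      gcongr
      rw [← ENNReal.ofReal_sub _ (by positivity)]
      apply ENNReal.ofReal_le_ofReal
      have hkd : (2 ^ (k+1) : ℝ) ^ d = (2:ℝ)^d * (2 ^ k : ℝ) ^ d := by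
        rw [pow_succ, mul_comm ((2:ℝ)^k) 2, mul_pow]
      have h2d : (2:ℝ) ≤ 2 ^ d := by
        calc (2:ℝ) = 2 ^ 1 := (pow_one 2).symm
        _ ≤ 2 ^ d := pow_le_pow_right₀ one_le_two hd
      rw [hkd]
      nlinarith [pow_pos (show (0:ℝ) < 2^k by positivity) d]
    have hptwise : ∀ x ∈ A k, ENNReal.ofReal (((2 ^ (k + 2) : ℝ)) ^ (-(d : ℝ))) ≤
        ENNReal.ofReal ((1 + ‖x‖) ^ (-(d : ℝ))) := by
      intro x hx
      apply ENNReal.ofReal_le_ofReal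
      apply Real.rpow_le_rpow_of_nonpos (by positivity) _ (neg_nonpos.2 (by positivity))
      have h1 : ‖x‖ < 2 ^ (k + 1) := by simpa using hx.1
      have h2 : (2 ^ (k + 2) : ℝ) = 2 ^ (k+1) + 2 ^ (k+1) := by ring
      have h3 : (1:ℝ) ≤ 2 ^ (k+1) := one_le_pow₀ one_le_two
      linarith
    calc c ≤ ENNReal.ofReal ((2 ^ (k + 2) : ℝ) ^ (-(d : ℝ)) * (2 ^ k : ℝ) ^ d) * β := by
            rw [hc]
            gcongr
            rw [Real.rpow_neg (by positivity), Real.rpow_natCast,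
              show ((2:ℝ) ^ (k+2)) ^ d = (2^k : ℝ)^d * 4^d by rw [← mul_pow]; ring_nf]
            rw [mul_inv]
            rw [mul_comm (((2^k:ℝ)^d)⁻¹) _, mul_assoc, inv_mul_cancel₀ (by positivity), mul_one]
      _ = ENNReal.ofReal ((2 ^ (k + 2) : ℝ) ^ (-(d : ℝ))) * (ENNReal.ofReal ((2 ^ k : ℝ) ^ d) * β) := by
            rw [← mul_assoc, ← ENNReal.ofReal_mul (by positivity)]
      _ ≤ ENNReal.ofReal ((2 ^ (k + 2) : ℝ) ^ (-(d : ℝ))) * μ (A k) := by gcongr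
      _ = ∫⁻ _ in A k, ENNReal.ofReal ((2 ^ (k + 2) : ℝ) ^ (-(d : ℝ))) ∂μ := by
            rw [setLIntegral_const, mul_comm]
      _ ≤ ∫⁻ x in A k, ENNReal.ofReal ((1 + ‖x‖) ^ (-(d : ℝ))) ∂μ :=
            setLIntegral_mono (by fun_prop) hptwise
  have htop : (⊤ : ℝ≥0∞) ≤ ∫⁻ x, ENNReal.ofReal ((1 + ‖x‖) ^ (-(d : ℝ))) ∂μ := by
    calc (⊤ : ℝ≥0∞) = ∑' _ : ℕ, c := (ENNReal.tsum_const_eq_top_of_ne_zero hcpos).symm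
      _ ≤ ∑' k, ∫⁻ x in A k, ENNReal.ofReal ((1 + ‖x‖) ^ (-(d : ℝ))) ∂μ :=
            ENNReal.tsum_le_tsum key
      _ = ∫⁻ x in ⋃ k, A k, ENNReal.ofReal ((1 + ‖x‖) ^ (-(d : ℝ))) ∂μ :=
            (lintegral_iUnion hmeas hdisj _).symm
      _ ≤ ∫⁻ x, ENNReal.ofReal ((1 + ‖x‖) ^ (-(d : ℝ))) ∂μ := setLIntegral_le_lintegral _ _
  exact absurd (top_le_iff.1 htop) hfin.ne

lemma integrable_iff_aux (m : ℕ) (hm : 1 ≤ m) (q : ℝ) :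
    Integrable (fun t : EuclideanSpace ℝ (Fin m) => (1 + ‖t‖ ^ 2) ^ (-(q - 1) / 2)) ↔
      (m + 1 : ℝ) < q := by
  have hfr : finrank ℝ (EuclideanSpace ℝ (Fin m)) = m := finrank_euclideanSpace_fin
  constructor
  · intro h
    by_contra hq
    push_neg at hq
    refine not_integrable_aux (volume : Measure (EuclideanSpace ℝ (Fin m)))
      (by rw [hfr]; omega) ?_
    refine h.mono' (Measurable.aestronglyMeasurable (by fun_prop)) (Filter.Eventually.of_forall fun x => ?_)
    have h0 : (0:ℝ) ≤ ‖x‖ := norm_nonneg x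
    have h1 : (0:ℝ) < 1 + ‖x‖ := by linarith
    have h2 : (0:ℝ) < 1 + ‖x‖^2 := by positivity
    rw [Real.norm_eq_abs, abs_of_nonneg (Real.rpow_nonneg h1.le _)]
    have e1 : (1 + ‖x‖) ^ (-(finrank ℝ (EuclideanSpace ℝ (Fin m)) : ℝ))
        = ((1 + ‖x‖)^2) ^ (-(finrank ℝ (EuclideanSpace ℝ (Fin m)) : ℝ)/2) := by
      rw [← Real.rpow_natCast (1 + ‖x‖) 2, ← Real.rpow_mul h1.le]
      congr 1
      ring
    rw [e1]
    calc ((1 + ‖x‖)^2) ^ (-(finrank ℝ (EuclideanSpace ℝ (Fin m)) : ℝ)/2)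
        ≤ (1 + ‖x‖^2) ^ (-(finrank ℝ (EuclideanSpace ℝ (Fin m)) : ℝ)/2) := by
          have hle : -(finrank ℝ (EuclideanSpace ℝ (Fin m)) : ℝ)/2 ≤ 0 := by
            have : (0:ℝ) ≤ (finrank ℝ (EuclideanSpace ℝ (Fin m)) : ℝ) := Nat.cast_nonneg _
            linarith
          exact Real.rpow_le_rpow_of_nonpos h2 (by nlinarith) hle
      _ ≤ (1 + ‖x‖^2) ^ (-(q-1)/2) := by
          apply Real.rpow_le_rpow_of_exponent_le (by nlinarith [sq_nonneg ‖x‖])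
          rw [hfr]
          linarith
  · intro h
    have := integrable_rpow_neg_one_add_norm_sq (E := EuclideanSpace ℝ (Fin m))
      (μ := volume) (r := q - 1) (by rw [hfr]; linarith)
    simpa [neg_div] using this

lemma gram_aux {H : Type*} [NormedAddCommGroup H] [InnerProductSpace ℝ H] {m : ℕ}
    (R : Fin (m+1) → H) (c' : Fin m → ℝ) (w : H)
    (hw : R (Fin.last m) = w + ∑ i, c' i • R i.castSucc)
    (hworth : ∀ i : Fin m, (inner ℝ w (R i.castSucc) : ℝ) = 0) :
    gram R = gram (fun i => R i.castSucc) * ‖w‖^2 := by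
  classical
  set G : Matrix (Fin (m+1)) (Fin (m+1)) ℝ := Matrix.of fun a b => (inner ℝ (R a) (R b) : ℝ) with hG
  set N : Matrix (Fin (m+1)) (Fin (m+1)) ℝ :=
    fun a b => if b = Fin.last m then (Fin.snoc (fun i => -(c' i)) 1 : Fin (m+1) → ℝ) a
      else if a = b then 1 else 0 with hN
  set R' : Fin (m+1) → H := Fin.snoc (fun i => R i.castSucc) w with hR'def
  have hR' : ∀ b, R' b = ∑ a, N a b • R a := by
    intro b
    refine Fin.lastCases ?_ (fun j => ?_) b
    · have : ∀ a : Fin (m+1), N a (Fin.last m) • R a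
          = (Fin.snoc (fun i => -(c' i)) 1 : Fin (m+1) → ℝ) a • R a := by
        intro a; simp [hN]
      rw [Finset.sum_congr rfl (fun a _ => this a), Fin.sum_univ_castSucc]
      simp only [Fin.snoc_castSucc, Fin.snoc_last, one_smul, neg_smul, hR'def]
      rw [hw, Finset.sum_neg_distrib]
      abel
    · have hne : (j.castSucc : Fin (m+1)) ≠ Fin.last m := (Fin.castSucc_lt_last j).ne
      have : ∀ a : Fin (m+1), N a j.castSucc • R a
          = (if a = j.castSucc then (1:ℝ) else 0) • R a := by
        intro a; simp [hN, hne]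
      rw [Finset.sum_congr rfl (fun a _ => this a)]
      simp [hR'def]
  have hG' : Matrix.of (fun a b => (inner ℝ (R' a) (R' b) : ℝ)) = Nᵀ * G * N := by
    ext i j
    rw [Matrix.of_apply, hR' i, hR' j, sum_inner]
    rw [show (Nᵀ * G * N) i j = ∑ b, (∑ a, N a i * G a b) * N b j by
      simp [Matrix.mul_apply, Matrix.transpose_apply, Finset.sum_mul]]
    have lhs : ∀ a, (inner ℝ (N a i • R a) (∑ b, N b j • R b) : ℝ)
        = ∑ b, N a i * (N b j * (inner ℝ (R a) (R b) : ℝ)) := by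
      intro a
      rw [real_inner_smul_left, inner_sum, Finset.mul_sum]
      exact Finset.sum_congr rfl fun b _ => by rw [real_inner_smul_right]
    rw [Finset.sum_congr rfl fun a _ => lhs a, Finset.sum_comm]
    refine Finset.sum_congr rfl fun b _ => ?_
    rw [Finset.sum_mul]
    refine Finset.sum_congr rfl fun a _ => ?_
    simp only [hG, Matrix.of_apply]
    ring
  have hdetN : N.det = 1 := by
    have htri : N.BlockTriangular id := by
      intro a b hab
      have hbne : b ≠ Fin.last m := by
        intro h; subst h; exact absurd hab (not_lt.2 (Fin.le_last a))
      have habne : a ≠ b := (ne_of_gt hab)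
      simp [hN, hbne, habne]
    rw [Matrix.det_of_upperTriangular htri]
    apply Finset.prod_eq_one
    intro a _
    by_cases ha : a = Fin.last m
    · subst ha; simp [hN]
    · simp [hN, ha]
  have hdet' : (Matrix.of (fun a b => (inner ℝ (R' a) (R' b) : ℝ))).det = G.det := by
    rw [hG', Matrix.det_mul, Matrix.det_mul, Matrix.det_transpose, hdetN, mul_one, one_mul]
  have hcol : ∀ a : Fin (m+1), (inner ℝ (R' a) (R' (Fin.last m)) : ℝ)
      = if a = Fin.last m then ‖w‖^2 else 0 := by
    intro a
    refine Fin.lastCases ?_ (fun i => ?_) a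
    · simp [hR'def, Fin.snoc_last, real_inner_self_eq_norm_sq]
    · have hne : (i.castSucc : Fin (m+1)) ≠ Fin.last m := (Fin.castSucc_lt_last i).ne
      simp [hR'def, Fin.snoc_last, Fin.snoc_castSucc, hne, real_inner_comm, hworth i]
  have hexp := Matrix.det_succ_column
    (Matrix.of (fun a b => (inner ℝ (R' a) (R' b) : ℝ))) (Fin.last m)
  rw [Finset.sum_eq_single (Fin.last m)
    (fun a _ ha => by rw [Matrix.of_apply, hcol a, if_neg ha]; ring)
    (fun h => absurd (Finset.mem_univ _) h)] at hexp
  rw [Matrix.of_apply, hcol (Fin.last m), if_pos rfl] at hexp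
  have hsign : ((-1 : ℝ)) ^ ((Fin.last m : ℕ) + (Fin.last m : ℕ)) = 1 :=
    Even.neg_one_pow ⟨(Fin.last m : ℕ), rfl⟩
  rw [hsign, one_mul, Fin.succAbove_last] at hexp
  have hsub : ((Matrix.of (fun a b => (inner ℝ (R' a) (R' b) : ℝ))).submatrix
      Fin.castSucc Fin.castSucc) = Matrix.of (fun i j : Fin m =>
        (inner ℝ (R i.castSucc) (R j.castSucc) : ℝ)) := by
    ext i j
    simp [hR'def, Fin.snoc_castSucc]
  rw [hsub] at hexp
  show G.det = _
  rw [← hdet', hexp, _root_.gram]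
  ring

lemma gram_eq_det_sq {m : ℕ} (L : EuclideanSpace ℝ (Fin m) ≃ₗ[ℝ] EuclideanSpace ℝ (Fin m)) :
    gram (fun i => L (EuclideanSpace.single i 1))
      = (LinearMap.det (L : EuclideanSpace ℝ (Fin m) →ₗ[ℝ] EuclideanSpace ℝ (Fin m)))^2 := by
  classical
  set b := (EuclideanSpace.basisFun (Fin m) ℝ).toBasis with hb
  set M := LinearMap.toMatrix b b (L : EuclideanSpace ℝ (Fin m) →ₗ[ℝ] EuclideanSpace ℝ (Fin m))
    with hM
  have hdet : M.det = LinearMap.det (L : EuclideanSpace ℝ (Fin m) →ₗ[ℝ] EuclideanSpace ℝ (Fin m)) :=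
    LinearMap.det_toMatrix b _
  have hMapp : ∀ k i, M k i = L (EuclideanSpace.single i 1) k := by
    intro k i
    rw [hM, LinearMap.toMatrix_apply]
    have h1 : b i = EuclideanSpace.single i 1 := by
      rw [hb, OrthonormalBasis.coe_toBasis, EuclideanSpace.basisFun_apply]
    rw [h1]
    rfl
  have hgram : (Matrix.of fun i j : Fin m =>
      (inner ℝ (L (EuclideanSpace.single i 1)) (L (EuclideanSpace.single j 1)) : ℝ)) = Mᵀ * M := by
    ext i j
    rw [Matrix.of_apply, Matrix.mul_apply]
    rw [show (inner ℝ (L (EuclideanSpace.single i 1)) (L (EuclideanSpace.single j 1)) : ℝ)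
        = ∑ k, L (EuclideanSpace.single i 1) k * L (EuclideanSpace.single j 1) k from ?_]
    · exact Finset.sum_congr rfl fun k _ => by rw [Matrix.transpose_apply, hMapp, hMapp]
    · rw [PiLp.inner_apply]
      simp [RCLike.inner_apply, starRingEnd_apply, mul_comm]
  rw [_root_.gram, hgram, Matrix.det_mul, Matrix.det_transpose, hdet, sq]

theorem main_calc (n m : ℕ) (hm : 1 ≤ m) (R : Fin (m + 1) → EuclideanSpace ℝ (Fin n))
    (hind : LinearIndependent ℝ (fun i : Fin m => R i.castSucc))
    (hspan : R (Fin.last m) ∉ Submodule.span ℝ (Set.range (fun i : Fin m => R i.castSucc)))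
    (p' : ℝ) (hp' : (m + 1 : ℝ) < p') :
    (∫ t : EuclideanSpace ℝ (Fin m),
        ‖R (Fin.last m) + ∑ i : Fin m, t i • R i.castSucc‖ ^ (-(p' - 1)) =
      gram (fun i : Fin m => R i.castSucc) ^ ((p' - (m + 1) - 1) / 2) /
          gram R ^ ((p' - (m + 1)) / 2) *
        ∫ t : EuclideanSpace ℝ (Fin m), (1 + ‖t‖ ^ 2) ^ (-(p' - 1) / 2)) := by
  classical
  set V : Submodule ℝ (EuclideanSpace ℝ (Fin n)) :=
    Submodule.span ℝ (Set.range (fun i : Fin m => R i.castSucc)) with hVdef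
  haveI : FiniteDimensional ℝ V := FiniteDimensional.span_of_finite ℝ (Set.finite_range _)
  have hV : finrank ℝ V = m := by
    rw [hVdef, finrank_span_eq_card hind, Fintype.card_fin]
  set bV : OrthonormalBasis (Fin m) ℝ V := (stdOrthonormalBasis ℝ V).reindex (finCongr hV)
    with hbV
  set bR : Basis (Fin m) ℝ V := Basis.span hind with hbR
  set v : V := V.orthogonalProjectionOnto (R (Fin.last m)) with hvdef
  set w : EuclideanSpace ℝ (Fin n) := R (Fin.last m) - v with hwdef
  have hworthV : w ∈ Vᗮ := V.sub_starProjection_mem_orthogonal (R (Fin.last m))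
  have hw0 : w ≠ 0 := by
    intro h
    apply hspan
    have : R (Fin.last m) = (v : EuclideanSpace ℝ (Fin n)) := by
      rw [hwdef] at h; linear_combination (norm := module) h
    rw [this]; exact SetLike.coe_mem v
  have hW : 0 < ‖w‖ := norm_pos_iff.2 hw0
  have hworth : ∀ i : Fin m, (inner ℝ w (R i.castSucc) : ℝ) = 0 := by
    intro i
    exact (Submodule.mem_orthogonal' V w).1 hworthV _
      (Submodule.subset_span ⟨i, rfl⟩)
  have hwv : R (Fin.last m) = w + (v : EuclideanSpace ℝ (Fin n)) := by
    rw [hwdef]; abel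
  set c' : Fin m → ℝ := bR.equivFun v with hc'
  have hv : (v : EuclideanSpace ℝ (Fin n)) = ∑ i, c' i • R i.castSucc := by
    conv_lhs => rw [← bR.sum_equivFun v]
    push_cast
    refine Finset.sum_congr rfl fun i _ => ?_
    rw [hc']
    congr 1
    exact congrArg Subtype.val (Basis.span_apply hind i)
  have hwsum : R (Fin.last m) = w + ∑ i, c' i • R i.castSucc := by rw [hwv, hv]
  have gramR : gram R = gram (fun i => R i.castSucc) * ‖w‖^2 := gram_aux R c' w hwsum hworth
  -- the linear equivalence
  set L : EuclideanSpace ℝ (Fin m) ≃ₗ[ℝ] EuclideanSpace ℝ (Fin m) :=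
    ((WithLp.linearEquiv 2 ℝ (Fin m → ℝ)).trans bR.equivFun.symm).trans bV.repr.toLinearEquiv
    with hLdef
  set D : ℝ := LinearMap.det (L : EuclideanSpace ℝ (Fin m) →ₗ[ℝ] EuclideanSpace ℝ (Fin m))
    with hDdef
  have hD0 : D ≠ 0 := by
    rw [hDdef]
    simpa using L.isUnit_det'.ne_zero
  have hDpos : 0 < |D| := abs_pos.2 hD0
  have hLsingle : ∀ i : Fin m, L (EuclideanSpace.single i 1) = bV.repr (bR i) := by
    intro i
    have h1 : bR.equivFun (bR i) = Pi.single i 1 := by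
      ext j
      simp [Basis.equivFun_apply, Finsupp.single_apply, Pi.single_apply, eq_comm]
    have h2 : bR.equivFun.symm (Pi.single i 1) = bR i := by
      rw [← h1, LinearEquiv.symm_apply_apply]
    rw [hLdef]
    simp only [LinearEquiv.trans_apply]
    rw [show (WithLp.linearEquiv 2 ℝ (Fin m → ℝ)) (EuclideanSpace.single i 1)
      = Pi.single i 1 from rfl, h2]
    rfl
  have gram1 : gram (fun i : Fin m => R i.castSucc) = D^2 := by
    rw [hDdef, ← gram_eq_det_sq L]
    unfold _root_.gram
    congr 1
    ext i j
    show (inner ℝ (R i.castSucc) (R j.castSucc) : ℝ)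
      = (inner ℝ (L (EuclideanSpace.single i 1)) (L (EuclideanSpace.single j 1)) : ℝ)
    rw [hLsingle, hLsingle, bV.repr.inner_map_map (bR i) (bR j)]
    rw [show (inner ℝ (bR i) (bR j) : ℝ) = inner ℝ ((bR i : EuclideanSpace ℝ (Fin n)))
      ((bR j : EuclideanSpace ℝ (Fin n))) from rfl]
    rw [Basis.span_apply hind i, Basis.span_apply hind j]
  -- pointwise identity
  set e : ℝ := -(p' - 1) / 2 with hedef
  set c : EuclideanSpace ℝ (Fin m) := bV.repr v with hcdef
  set g : EuclideanSpace ℝ (Fin m) → ℝ := fun s => (‖w‖^2 + ‖s‖^2) ^ e with hgdef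
  have hpt : ∀ t : EuclideanSpace ℝ (Fin m),
      ‖R (Fin.last m) + ∑ i, t i • R i.castSucc‖ ^ (-(p' - 1)) = g (c + L t) := by
    intro t
    set u : V := v + bR.equivFun.symm ((WithLp.linearEquiv 2 ℝ (Fin m → ℝ)) t) with hu
    have hucoe : (u : EuclideanSpace ℝ (Fin n))
        = ↑v + ∑ i, t i • R i.castSucc := by
      rw [hu, Submodule.coe_add]
      congr 1
      rw [Basis.equivFun_symm_apply]
      push_cast
      refine Finset.sum_congr rfl fun i _ => ?_
      rw [Basis.span_apply hind i]
      rfl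
    have hRu : R (Fin.last m) + ∑ i, t i • R i.castSucc
        = w + (u : EuclideanSpace ℝ (Fin n)) := by
      rw [hwv, hucoe]
      abel
    have hinner : (inner ℝ w ((u : EuclideanSpace ℝ (Fin n))) : ℝ) = 0 :=
      (Submodule.mem_orthogonal' V w).1 hworthV _ (SetLike.coe_mem u)
    have hnu : ‖(u : EuclideanSpace ℝ (Fin n))‖ = ‖c + L t‖ := by
      rw [show ‖(u : EuclideanSpace ℝ (Fin n))‖ = ‖u‖ from rfl, ← bV.repr.norm_map u]
      congr 1
      rw [hu, map_add]
      rfl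
    have hnorm2 : ‖R (Fin.last m) + ∑ i, t i • R i.castSucc‖^2
        = ‖w‖^2 + ‖c + L t‖^2 := by
      rw [hRu, norm_add_sq_real, hinner, hnu]
      ring
    simp only [hgdef]
    rw [show (‖w‖^2 + ‖c + L t‖^2 : ℝ)
      = ‖R (Fin.last m) + ∑ i, t i • R i.castSucc‖^2 from hnorm2.symm]
    rw [← Real.rpow_natCast (‖R (Fin.last m) + ∑ i, t i • R i.castSucc‖) 2,
      ← Real.rpow_mul (norm_nonneg _), hedef]
    congr 1
    push_cast
    ring
  have step1 : ∫ t : EuclideanSpace ℝ (Fin m),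
      ‖R (Fin.last m) + ∑ i, t i • R i.castSucc‖ ^ (-(p' - 1))
      = |D|⁻¹ * ∫ s, g s := by
    rw [show (fun t : EuclideanSpace ℝ (Fin m) =>
        ‖R (Fin.last m) + ∑ i, t i • R i.castSucc‖ ^ (-(p' - 1)))
      = fun t => (fun s => g (c + s)) (L t) from funext fun t => by
        simpa using hpt t]
    rw [integral_comp_linEquiv volume L (fun s => g (c + s)), ← hDdef]
    congr 1
    exact integral_add_left_eq_self g c
  have hfr : finrank ℝ (EuclideanSpace ℝ (Fin m)) = m := finrank_euclideanSpace_fin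
  set I : ℝ := ∫ u : EuclideanSpace ℝ (Fin m), (1 + ‖u‖^2) ^ e with hI
  have step2 : ∫ s, g s = ‖w‖^m * ((‖w‖^2) ^ e * I) := by
    have hsc := Measure.integral_comp_smul_of_nonneg (volume : Measure (EuclideanSpace ℝ (Fin m)))
      g ‖w‖ (hR := norm_nonneg w)
    rw [hfr] at hsc
    have hpt2 : ∀ u : EuclideanSpace ℝ (Fin m),
        g (‖w‖ • u) = (‖w‖^2) ^ e * (1 + ‖u‖^2) ^ e := by
      intro u
      simp only [hgdef]
      rw [norm_smul, Real.norm_eq_abs, abs_of_nonneg (norm_nonneg w)]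
      rw [show (‖w‖^2 + (‖w‖*‖u‖)^2 : ℝ) = ‖w‖^2 * (1 + ‖u‖^2) by ring]
      rw [Real.mul_rpow (by positivity) (by positivity)]
    simp_rw [hpt2] at hsc
    rw [integral_const_mul, smul_eq_mul, ← hI] at hsc
    have hWm : ((‖w‖ : ℝ)^m) ≠ 0 := by positivity
    rw [hsc]
    field_simp
  have key : ∀ x : ℝ, 0 < x → ∀ r : ℝ, ((x^2 : ℝ)) ^ r = x ^ (2*r) := by
    intro x hx r
    rw [← Real.rpow_natCast x 2, ← Real.rpow_mul hx.le]
    norm_num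
  have coef : |D|⁻¹ * (‖w‖^m * ((‖w‖^2) ^ e))
      = (D^2) ^ ((p' - (m + 1) - 1)/2) / ((D^2 * ‖w‖^2)) ^ ((p' - (m + 1))/2) := by
    have hDsq : D^2 = |D|^2 := (sq_abs D).symm
    rw [hDsq, key |D| hDpos, key ‖w‖ hW, Real.mul_rpow (by positivity) (by positivity),
      key |D| hDpos, key ‖w‖ hW]
    rw [← Real.rpow_natCast ‖w‖ m, ← Real.rpow_neg_one |D|, ← Real.rpow_add hW,
      div_mul_eq_div_div, ← Real.rpow_sub hDpos, div_eq_mul_inv,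
      ← Real.rpow_neg (norm_nonneg w)]
    congr 1
    · congr 1
      push_cast
      ring
    · rw [hedef]
      push_cast
      ring
  rw [step1, step2, gramR, gram1]
  calc |D|⁻¹ * (‖w‖ ^ m * ((‖w‖^2) ^ e * I))
      = (|D|⁻¹ * (‖w‖^m * ((‖w‖^2) ^ e))) * I := by ring
    _ = ((D^2) ^ ((p' - (m + 1) - 1)/2) / ((D^2 * ‖w‖^2)) ^ ((p' - (m + 1))/2)) * I := by
        rw [coef]

end Aux

/-- With `ℓ = m + 1`: if `R₁,…,R_{ℓ−1}` are linearly independent, `R_ℓ` is not in their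
span, and `p' > ℓ`, then
`∫_{ℝ^{ℓ−1}} ‖R_ℓ + ∑ tⁱ Rᵢ‖^{−(p'−1)} dt
  = G(R₁,…,R_{ℓ−1})^{(p'−ℓ−1)/2} / G(R₁,…,R_ℓ)^{(p'−ℓ)/2} · ∫_{ℝ^{ℓ−1}} (1+‖t‖²)^{−(p'−1)/2} dt`,
and the last integral is finite if and only if the exponent satisfies `p' > ℓ`. -/
theorem stmt19 (n m : ℕ) (hm : 1 ≤ m) (R : Fin (m + 1) → EuclideanSpace ℝ (Fin n))
    (hind : LinearIndependent ℝ (fun i : Fin m => R i.castSucc))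
    (hspan : R (Fin.last m) ∉ Submodule.span ℝ (Set.range (fun i : Fin m => R i.castSucc)))
    (p' : ℝ) (hp' : (m + 1 : ℝ) < p') :
    (∫ t : EuclideanSpace ℝ (Fin m),
        ‖R (Fin.last m) + ∑ i : Fin m, t i • R i.castSucc‖ ^ (-(p' - 1)) =
      gram (fun i : Fin m => R i.castSucc) ^ ((p' - (m + 1) - 1) / 2) /
          gram R ^ ((p' - (m + 1)) / 2) *
        ∫ t : EuclideanSpace ℝ (Fin m), (1 + ‖t‖ ^ 2) ^ (-(p' - 1) / 2)) ∧
    ∀ q : ℝ,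
      (Integrable (fun t : EuclideanSpace ℝ (Fin m) => (1 + ‖t‖ ^ 2) ^ (-(q - 1) / 2)) ↔
        (m + 1 : ℝ) < q) := by
  exact ⟨main_calc n m hm R hind hspan p' hp', fun q => integrable_iff_aux m hm q⟩
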